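/- Let G = Cay(Γ, H) be a Cayley digraph on n vertices with |H| = h and girth m (minimum length of a directed cycle), and set the activation threshold t = h. If s > n − m, then the higher diameter satisfies d_{st}(G) = n − s; if s ≤ n − m and a minimum-length directed cycle exists, then d_{st}(G) = ∞ (some s-subset fails to synchronize G). -/

import Mathlib

open Finset

-- One step of the activation process: a vertex becomes active
-- if at least `t` of its in-neighbors are active.
open Classical in
noncomputable def actStep {V : Type*} [Fintype V] (E : V → V → Prop) (t : ℕ)
    (S : Finset V) : Finset V :=
  S ∪ Finset.univ.filter (fun v => t ≤ (S.filter (fun u => E u v)).card)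

/-- `activeSets E t S i` is the set of active vertices after `i` steps. -/
noncomputable def activeSets {V : Type*} [Fintype V] (E : V → V → Prop) (t : ℕ)
    (S : Finset V) (i : ℕ) : Finset V :=
  (actStep E t)^[i] S

-- The least number of steps needed to activate all vertices (`⊤` if never).
open Classical in
noncomputable def syncTime {V : Type*} [Fintype V] (E : V → V → Prop) (t : ℕ)
    (S : Finset V) : ℕ∞ :=
  if h : ∃ i, activeSets E t S i = Finset.univ then (Nat.find h : ℕ∞) else ⊤

/-- The higher diameter `d_{st}`: the max of `syncTime` over all `s`-subsets. -/
noncomputable def higherDiam {V : Type*} [Fintype V] (E : V → V → Prop) (t s : ℕ) : ℕ∞ :=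
  ⨆ S : {S : Finset V // S.card = s}, syncTime E t S.1

/-- There is a directed cycle of length `m` in the digraph `E`, all of whose
vertices lie in `T`. -/
def cycleIn {V : Type*} (E : V → V → Prop) (T : Set V) (m : ℕ) : Prop :=
  0 < m ∧ ∃ c : ZMod m → V, Function.Injective c ∧ (∀ i, c i ∈ T) ∧
    ∀ i, E (c i) (c (i + 1))

/-- There is a directed cycle of length `m` in the digraph `E`. -/
def hasCycle {V : Type*} (E : V → V → Prop) (m : ℕ) : Prop :=
  0 < m ∧ ∃ c : ZMod m → V, Function.Injective c ∧ ∀ i, E (c i) (c (i + 1))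


set_option maxHeartbeats 1000000
section helper
lemma hasCycle_of_walk {V : Type*} (E : V → V → Prop) (w : ℕ → V) (l : ℕ) (hl : 0 < l)
    (hper : ∀ n, w (n + l) = w n)
    (hinj : ∀ a b, a < l → b < l → w a = w b → a = b)
    (hEw : ∀ n, E (w n) (w (n + 1))) : hasCycle E l := by
  haveI : NeZero l := ⟨hl.ne'⟩
  have hmod : ∀ n, w (n % l) = w n := by
    intro n
    conv_rhs => rw [← Nat.mod_add_div n l]
    induction n / l with
    | zero => simp
    | succ q ih => rw [Nat.mul_succ, ← Nat.add_assoc, hper, ih]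
  have hcong : ∀ a b : ℕ, (a : ZMod l) = b → w a = w b := by
    intro a b hab
    rw [← hmod a, ← hmod b]
    have := (ZMod.natCast_eq_natCast_iff a b l).mp hab
    rw [Nat.ModEq] at this
    rw [this]
  refine ⟨hl, fun i => w i.val, ?_, ?_⟩
  · intro a b hab
    have := hinj a.val b.val (ZMod.val_lt a) (ZMod.val_lt b) hab
    exact ZMod.val_injective l this
  · intro i
    have h1 : w ((i + 1 : ZMod l).val) = w (i.val + 1) := by
      apply hcong
      push_cast [ZMod.natCast_val, ZMod.cast_id]
      simp [ZMod.natCast_val, ZMod.cast_id]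
    show E (w i.val) (w ((i+1).val))
    rw [h1]
    exact hEw i.val


section cayley
variable {Γ : Type*} [Group Γ] [Fintype Γ] [DecidableEq Γ] (H : Finset Γ)
  (E : Γ → Γ → Prop)

open Classical in
lemma full_iff (hE : ∀ x y, E x y ↔ ∃ h ∈ H, y = h * x) (S : Finset Γ) (v : Γ) :
    H.card ≤ (S.filter (fun u => E u v)).card ↔ ∀ h ∈ H, h⁻¹ * v ∈ S := by
  classical
  have himg : H.image (fun h => h⁻¹ * v) = Finset.univ.filter (fun u => E u v) := by
    ext u
    simp only [mem_image, mem_filter, mem_univ, true_and]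
    constructor
    · rintro ⟨h, hh, rfl⟩; exact (hE _ _).mpr ⟨h, hh, by group⟩
    · intro hu
      obtain ⟨h, hh, hv⟩ := (hE _ _).mp hu
      exact ⟨h, hh, by rw [hv]; group⟩
  have hinj : Set.InjOn (fun h : Γ => h⁻¹ * v) H := by
    intro a _ b _ hab
    exact inv_injective (mul_right_cancel hab)
  have hcard : (Finset.univ.filter (fun u => E u v)).card = H.card := by
    rw [← himg, Finset.card_image_of_injOn hinj]
  constructor
  · intro hle h hh
    have hsub : S.filter (fun u => E u v) ⊆ Finset.univ.filter (fun u => E u v) :=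
      Finset.filter_subset_filter _ (Finset.subset_univ S)
    have heq : S.filter (fun u => E u v) = Finset.univ.filter (fun u => E u v) :=
      Finset.eq_of_subset_of_card_le hsub (by rw [hcard]; exact hle)
    have : h⁻¹ * v ∈ Finset.univ.filter (fun u => E u v) := by
      rw [← himg]; exact Finset.mem_image_of_mem _ hh
    rw [← heq] at this
    exact (Finset.mem_filter.mp this).1
  · intro hall
    have hsub : H.image (fun h => h⁻¹ * v) ⊆ S.filter (fun u => E u v) := by
      intro u hu
      obtain ⟨h, hh, rfl⟩ := Finset.mem_image.mp hu
      refine Finset.mem_filter.mpr ⟨hall h hh, ?_⟩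
      exact (hE _ _).mpr ⟨h, hh, by group⟩
    calc H.card = (H.image (fun h => h⁻¹ * v)).card := (Finset.card_image_of_injOn hinj).symm
      _ ≤ _ := Finset.card_le_card hsub

lemma mem_actStep (hE : ∀ x y, E x y ↔ ∃ h ∈ H, y = h * x) (S : Finset Γ) (v : Γ) :
    v ∈ actStep E H.card S ↔ v ∈ S ∨ ∀ h ∈ H, h⁻¹ * v ∈ S := by
  rw [← full_iff H E hE]
  simp [actStep]

lemma exists_newly_active (hE : ∀ x y, E x y ↔ ∃ h ∈ H, y = h * x) (m : ℕ)
    (hmin : ∀ l, hasCycle E l → m ≤ l) (S : Finset Γ) (hne : S ≠ Finset.univ)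
    (hcard : (Finset.univ \ S).card < m) :
    ∃ v ∉ S, v ∈ actStep E H.card S := by
  classical
  by_contra hcon
  push_neg at hcon
  -- every inactive vertex has an inactive in-neighbor
  have hstep : ∀ v : Γ, ∃ u : Γ, v ∉ S → u ∉ S ∧ E u v := by
    intro v
    by_cases hv : v ∈ S
    · exact ⟨v, fun h => absurd hv h⟩
    · have hv2 := hcon v hv
      rw [mem_actStep H E hE] at hv2
      push_neg at hv2
      obtain ⟨h, hh, hhS⟩ := hv2.2
      exact ⟨h⁻¹ * v, fun _ => ⟨hhS, (hE _ _).mpr ⟨h, hh, by group⟩⟩⟩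
  choose g hg using hstep
  obtain ⟨v0, hv0⟩ : ∃ v, v ∉ S := by
    by_contra h; push_neg at h
    exact hne (Finset.eq_univ_iff_forall.mpr fun v => h v)
  set f : ℕ → Γ := fun n => g^[n] v0 with hfdef
  have hf : ∀ n, f n ∉ S := by
    intro n
    induction n with
    | zero => exact hv0
    | succ k ih =>
      have : f (k+1) = g (f k) := Function.iterate_succ_apply' g k v0
      rw [this]
      exact (hg (f k) ih).1
  have hEf : ∀ n, E (f (n + 1)) (f n) := by
    intro n
    have : f (n+1) = g (f n) := Function.iterate_succ_apply' g n v0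
    rw [this]
    exact (hg (f n) (hf n)).2
  set N := (Finset.univ \ S).card with hN
  have hmaps : ∀ a ∈ Finset.range (N + 1), f a ∈ Finset.univ \ S := by
    intro a _
    exact Finset.mem_sdiff.mpr ⟨Finset.mem_univ _, hf a⟩
  obtain ⟨x, hx, y, hy, hxy, hfxy⟩ :=
    Finset.exists_ne_map_eq_of_card_lt_of_maps_to (by simp; exact le_rfl) hmaps
  rw [Finset.mem_range] at hx hy
  have hP : ∃ j, ∃ i, i < j ∧ f i = f j := by
    rcases lt_or_gt_of_ne hxy with h | h
    · exact ⟨y, x, h, hfxy⟩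
    · exact ⟨x, y, h, hfxy.symm⟩
  set j0 := Nat.find hP with hj0
  obtain ⟨i0, hij, hfeq⟩ := Nat.find_spec hP
  have hj0le : j0 ≤ N := by
    rcases lt_or_gt_of_ne hxy with h | h
    · exact le_trans (Nat.find_le ⟨x, h, hfxy⟩) (by omega)
    · exact le_trans (Nat.find_le ⟨y, h, hfxy.symm⟩) (by omega)
  set l := j0 - i0 with hl
  have hlpos : 0 < l := by omega
  have finj : ∀ a b, i0 ≤ a → a < j0 → i0 ≤ b → b < j0 → f a = f b → a = b := by
    have key : ∀ a b, a < b → b < j0 → f a = f b → False := by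
      intro a b hab hbj hfe
      exact Nat.find_min hP hbj ⟨a, hab, hfe⟩
    intro a b _ ha _ hb he
    rcases lt_trichotomy a b with h | h | h
    · exact absurd (key a b h hb he) (by simp)
    · exact h
    · exact absurd (key b a h ha he.symm) (by simp)
  have hcyc : hasCycle E l := by
    apply hasCycle_of_walk E (fun n => f (j0 - 1 - n % l)) l hlpos
    · intro n; simp [Nat.add_mod_right]
    · intro a b ha hb he
      simp only [Nat.mod_eq_of_lt ha, Nat.mod_eq_of_lt hb] at he
      have := finj _ _ (by omega) (by omega) (by omega) (by omega) he
      omega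
    · intro n
      set a := n % l with hadef
      have ha : a < l := Nat.mod_lt _ hlpos
      have step1 : (n + 1) % l = (a + 1) % l := by
        rw [hadef]
        conv_lhs => rw [← Nat.mod_add_div n l]
        rw [Nat.add_right_comm, Nat.add_mul_mod_self_left]
      have hmod1 : (n + 1) % l = if a = l - 1 then 0 else a + 1 := by
        by_cases hc : a = l - 1
        · rw [if_pos hc, step1, show a + 1 = l by omega, Nat.mod_self]
        · rw [if_neg hc, step1, Nat.mod_eq_of_lt (by omega)]
      simp only [hmod1, ← hadef]
      by_cases hcase : a = l - 1
      · rw [if_pos hcase, hcase]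
        have e1 : j0 - 1 - (l - 1) = i0 := by omega
        have e2 : j0 - 1 - 0 = j0 - 1 := by omega
        rw [e1, e2, hfeq]
        have := hEf (j0 - 1)
        rwa [show j0 - 1 + 1 = j0 by omega] at this
      · rw [if_neg hcase]
        have e1 : j0 - 1 - a = (j0 - 1 - (a + 1)) + 1 := by omega
        rw [e1]
        exact hEf _
  have := hmin l hcyc
  omega

lemma mod_succ_eq (n l : ℕ) (hl : 0 < l) :
    (n + 1) % l = if n % l = l - 1 then 0 else n % l + 1 := by
  have step1 : (n + 1) % l = (n % l + 1) % l := by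
    conv_lhs => rw [← Nat.mod_add_div n l]
    rw [Nat.add_right_comm, Nat.add_mul_mod_self_left]
  have ha : n % l < l := Nat.mod_lt _ hl
  by_cases hc : n % l = l - 1
  · rw [if_pos hc, step1, show n % l + 1 = l by omega, Nat.mod_self]
  · rw [if_neg hc, step1, Nat.mod_eq_of_lt (by omega)]

lemma cycle_of_mem (hE : ∀ x y, E x y ↔ ∃ h ∈ H, y = h * x) {h0 : Γ} (hh0 : h0 ∈ H) :
    hasCycle E (orderOf h0) := by
  apply hasCycle_of_walk E (fun n => h0 ^ n) (orderOf h0) (orderOf_pos h0)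
  · intro n; rw [pow_add, pow_orderOf_eq_one, mul_one]
  · intro a b ha hb he
    have := pow_eq_pow_iff_modEq.mp he
    rw [Nat.ModEq, Nat.mod_eq_of_lt ha, Nat.mod_eq_of_lt hb] at this
    exact this
  · intro n; exact (hE _ _).mpr ⟨h0, hh0, pow_succ' h0 n⟩

lemma inv_pow_not_mem (hE : ∀ x y, E x y ↔ ∃ h ∈ H, y = h * x) (m : ℕ)
    (hmin : ∀ l, hasCycle E l → m ≤ l) {h0 : Γ} (hh0 : h0 ∈ H) (r : ℕ)
    (hr : r + 1 < m) : (h0 ^ r)⁻¹ ∉ H := by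
  intro hmem
  have hord : m ≤ orderOf h0 := hmin _ (cycle_of_mem H E hE hh0)
  have hcyc : hasCycle E (r + 1) := by
    apply hasCycle_of_walk E (fun n => h0 ^ (n % (r + 1))) (r + 1) (by omega)
    · intro n; rw [Nat.add_mod_right]
    · intro a b ha hb he
      simp only [Nat.mod_eq_of_lt ha, Nat.mod_eq_of_lt hb] at he
      have := pow_eq_pow_iff_modEq.mp he
      rw [Nat.ModEq, Nat.mod_eq_of_lt (by omega), Nat.mod_eq_of_lt (by omega)] at this
      exact this
    · intro n
      show E (h0 ^ (n % (r + 1))) (h0 ^ ((n + 1) % (r + 1)))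
      rw [mod_succ_eq n (r + 1) (by omega)]
      by_cases hc : n % (r + 1) = r + 1 - 1
      · rw [if_pos hc]
        rw [show r + 1 - 1 = r from rfl] at hc
        rw [hc]
        exact (hE _ _).mpr ⟨(h0 ^ r)⁻¹, hmem, by group⟩
      · rw [if_neg hc]
        exact (hE _ _).mpr ⟨h0, hh0, pow_succ' h0 _⟩
  have := hmin _ hcyc
  omega

lemma activeSets_succ' {V : Type*} [Fintype V] (E' : V → V → Prop) (t : ℕ) (S : Finset V)
    (j : ℕ) : activeSets E' t S (j + 1) = actStep E' t (activeSets E' t S j) :=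
  Function.iterate_succ_apply' _ _ _

lemma subset_actStep {V : Type*} [Fintype V] (E' : V → V → Prop) (t : ℕ) (S : Finset V) :
    S ⊆ actStep E' t S := by
  intro v hv
  simp only [actStep, Finset.mem_union]
  exact Or.inl hv

lemma actStep_univ {V : Type*} [Fintype V] (E' : V → V → Prop) (t : ℕ) :
    actStep E' t Finset.univ = Finset.univ :=
  le_antisymm (Finset.subset_univ _) (subset_actStep E' t Finset.univ)

omit [Group Γ] [DecidableEq Γ] in
open Classical in
lemma syncTime_le_of {V : Type*} [Fintype V] (E' : V → V → Prop) (t : ℕ) (S : Finset V) (j : ℕ)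
    (hj : activeSets E' t S j = Finset.univ) : syncTime E' t S ≤ (j : ℕ∞) := by
  rw [syncTime, dif_pos ⟨j, hj⟩]
  exact_mod_cast Nat.find_min' _ hj

omit [Group Γ] [DecidableEq Γ] in
open Classical in
lemma syncTime_eq_of {V : Type*} [Fintype V] (E' : V → V → Prop) (t : ℕ) (S : Finset V) (j : ℕ)
    (hj : activeSets E' t S j = Finset.univ)
    (hn : ∀ i < j, activeSets E' t S i ≠ Finset.univ) : syncTime E' t S = (j : ℕ∞) := by
  rw [syncTime, dif_pos ⟨j, hj⟩]
  norm_cast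
  rw [Nat.find_eq_iff]
  exact ⟨hj, hn⟩

lemma reach_univ (hE : ∀ x y, E x y ↔ ∃ h ∈ H, y = h * x) (m : ℕ)
    (hmin : ∀ l, hasCycle E l → m ≤ l) (S : Finset Γ)
    (hS : (Finset.univ \ S).card < m) :
    activeSets E H.card S ((Finset.univ \ S).card) = Finset.univ := by
  classical
  set N := (Finset.univ \ S).card with hN
  set A := activeSets E H.card S with hA
  have claim : ∀ j, A j = Finset.univ ∨ (Finset.univ \ A j).card + j ≤ N := by
    intro j
    induction j with
    | zero => right; simp [hA, activeSets]; exact le_rfl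
    | succ j ih =>
      rcases ih with h | h
      · left; rw [hA, activeSets_succ', ← hA, h, actStep_univ]
      · by_cases hu : A j = Finset.univ
        · left; rw [hA, activeSets_succ', ← hA, hu, actStep_univ]
        · have hc : (Finset.univ \ A j).card < m := by omega
          obtain ⟨v, hvS, hvact⟩ := exists_newly_active H E hE m hmin (A j) hu hc
          right
          have hstep : A (j + 1) = actStep E H.card (A j) := by
            rw [hA, activeSets_succ']
          have hsub : Finset.univ \ A (j + 1) ⊆ Finset.univ \ A j := by
            apply Finset.sdiff_subset_sdiff (le_refl _)
            rw [hstep]; exact subset_actStep _ _ _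
          have hss : Finset.univ \ A (j + 1) ⊂ Finset.univ \ A j := by
            refine ⟨hsub, fun hcontra => ?_⟩
            have : v ∈ Finset.univ \ A (j + 1) :=
              hcontra (Finset.mem_sdiff.mpr ⟨Finset.mem_univ _, hvS⟩)
            rw [Finset.mem_sdiff, hstep] at this
            exact this.2 hvact
          have := Finset.card_lt_card hss
          omega
  rcases claim N with h | h
  · exact h
  · have : (Finset.univ \ A N).card = 0 := by omega
    have h2 : Finset.univ \ A N = ∅ := Finset.card_eq_zero.mp this
    have h3 : Finset.univ ⊆ A N := by
      intro v hv
      by_contra hvn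
      have : v ∈ Finset.univ \ A N := Finset.mem_sdiff.mpr ⟨hv, hvn⟩
      simp [h2] at this
    exact le_antisymm (Finset.subset_univ _) h3

lemma tight_activeSets (hE : ∀ x y, E x y ↔ ∃ h ∈ H, y = h * x) (m : ℕ)
    (hmin : ∀ l, hasCycle E l → m ≤ l) {h0 : Γ} (hh0 : h0 ∈ H) (k : ℕ) (hk : k < m) :
    ∀ j ≤ k, activeSets E H.card (Finset.univ \ (Finset.Icc 1 k).image (fun i => h0 ^ i)) j
      = Finset.univ \ (Finset.Icc (j + 1) k).image (fun i => h0 ^ i) := by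
  classical
  have hord : m ≤ orderOf h0 := hmin _ (cycle_of_mem H E hE hh0)
  have hpinj : ∀ a b, a ≤ k → b ≤ k → h0 ^ a = h0 ^ b → a = b := by
    intro a b ha hb he
    have := pow_eq_pow_iff_modEq.mp he
    rwa [Nat.ModEq, Nat.mod_eq_of_lt (by omega), Nat.mod_eq_of_lt (by omega)] at this
  intro j
  induction j with
  | zero => intro _; rfl
  | succ j ih =>
    intro hjk
    rw [activeSets_succ', ih (by omega)]
    ext v
    rw [mem_actStep H E hE]
    simp only [Finset.mem_sdiff, Finset.mem_univ, true_and]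
    constructor
    · rintro (hv | hall)
      · intro hv'
        apply hv
        exact Finset.image_subset_image (Finset.Icc_subset_Icc (by omega) (by omega)) hv'
      · intro hv'
        obtain ⟨l, hl, rfl⟩ := Finset.mem_image.mp hv'
        rw [Finset.mem_Icc] at hl
        have h1 := hall h0 hh0
        apply h1
        have : h0⁻¹ * h0 ^ l = h0 ^ (l - 1) := by
          rw [inv_mul_eq_iff_eq_mul, ← pow_succ']
          congr 1
          omega
        rw [this]
        exact Finset.mem_image.mpr ⟨l - 1, Finset.mem_Icc.mpr ⟨by omega, by omega⟩, rfl⟩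
    · intro hv'
      by_cases hv : v ∈ (Finset.Icc (j + 1) k).image (fun i => h0 ^ i)
      · obtain ⟨l, hl, rfl⟩ := Finset.mem_image.mp hv
        rw [Finset.mem_Icc] at hl
        have hlj : l = j + 1 := by
          by_contra hne
          exact hv' (Finset.mem_image.mpr ⟨l, Finset.mem_Icc.mpr ⟨by omega, hl.2⟩, rfl⟩)
        subst hlj
        right
        intro h hh
        intro hmem
        obtain ⟨l', hl', heq⟩ := Finset.mem_image.mp hmem
        rw [Finset.mem_Icc] at hl'
        set r := l' - (j + 1) with hr
        have hexp : h0 ^ l' = h0 ^ r * h0 ^ (j + 1) := by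
          rw [← pow_add]
          congr 1
          omega
        have hinv : h⁻¹ = h0 ^ r := by
          have : h⁻¹ * h0 ^ (j + 1) = h0 ^ r * h0 ^ (j + 1) := by rw [← hexp, heq]
          exact mul_right_cancel this
        have hhe : h = (h0 ^ r)⁻¹ := by rw [← hinv, inv_inv]
        rw [hhe] at hh
        exact inv_pow_not_mem H E hE m hmin hh0 r (by omega) hh
      · left; exact hv

end cayley
end helper

/-- For a Cayley digraph `G = Cay(Γ,H)` on `n` vertices with `|H| = h`, girth `m`
and threshold `t = h`: if `s > n - m` then `d_{st}(G) = n - s`; if `s ≤ n - m`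
(and a minimum-length directed cycle exists) then `d_{st}(G) = ∞`. -/
theorem stmt_13 {Γ : Type*} [Group Γ] [Fintype Γ] [DecidableEq Γ] (H : Finset Γ)
    (E : Γ → Γ → Prop) (hE : ∀ x y, E x y ↔ ∃ h ∈ H, y = h * x) (m : ℕ)
    (hm : hasCycle E m) (hmin : ∀ l, hasCycle E l → m ≤ l) (s : ℕ) :
    (Fintype.card Γ - m < s → s ≤ Fintype.card Γ →
      higherDiam E H.card s = ((Fintype.card Γ - s : ℕ) : ℕ∞)) ∧
    (s ≤ Fintype.card Γ - m → higherDiam E H.card s = ⊤) := by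
  obtain ⟨hm0, c, hcinj, hcE⟩ := hm
  have hmN : NeZero m := ⟨hm0.ne'⟩
  obtain ⟨h0, hh0, -⟩ : ∃ h ∈ H, c 1 = h * c 0 := by
    have := hcE 0
    rw [zero_add] at this
    exact (hE _ _).mp this
  have hmn : m ≤ Fintype.card Γ := by
    have := Fintype.card_le_of_injective c hcinj
    rwa [ZMod.card m] at this
  have hminC : ∀ l, hasCycle E l → m ≤ l := hmin
  constructor
  · intro hs1 hs2
    set n := Fintype.card Γ with hn
    set k := n - s with hk
    have hkm : k < m := by omega
    -- upper bound: every `s`-set synchronizes within `k` steps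
    have hub : ∀ S : Finset Γ, S.card = s → syncTime E H.card S ≤ (k : ℕ∞) := by
      intro S hS
      have hcd : (Finset.univ \ S).card = k := by
        rw [Finset.card_sdiff_of_subset (Finset.subset_univ S), Finset.card_univ, hS]
      have hreach : activeSets E H.card S k = Finset.univ := by
        rw [← hcd]
        exact reach_univ H E hE m hminC S (by rw [hcd]; exact hkm)
      exact syncTime_le_of E H.card S k hreach
    -- the tight example
    set T0 := (Finset.Icc 1 k).image (fun i => h0 ^ i) with hT0
    have hord : m ≤ orderOf h0 := hminC _ (cycle_of_mem H E hE hh0)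
    have hpinj : Set.InjOn (fun i => h0 ^ i) (Finset.Icc 1 k) := by
      intro a ha b hb he
      rw [Finset.coe_Icc, Set.mem_Icc] at ha hb
      have := pow_eq_pow_iff_modEq.mp he
      rwa [Nat.ModEq, Nat.mod_eq_of_lt (by omega), Nat.mod_eq_of_lt (by omega)] at this
    have hT0card : T0.card = k := by
      rw [hT0, Finset.card_image_of_injOn hpinj, Nat.card_Icc]
      omega
    have hS0card : (Finset.univ \ T0).card = s := by
      rw [Finset.card_sdiff_of_subset (Finset.subset_univ _), Finset.card_univ, hT0card]
      omega
    have htight := tight_activeSets H E hE m hminC hh0 k hkm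
    have hfull : activeSets E H.card (Finset.univ \ T0) k = Finset.univ := by
      rw [htight k le_rfl, Finset.Icc_eq_empty (by omega)]
      simp
    have hnotfull : ∀ j < k, activeSets E H.card (Finset.univ \ T0) j ≠ Finset.univ := by
      intro j hj hcontra
      rw [htight j (le_of_lt hj)] at hcontra
      have hmem : h0 ^ (j + 1) ∈ (Finset.Icc (j + 1) k).image (fun i => h0 ^ i) :=
        Finset.mem_image.mpr ⟨j + 1, Finset.mem_Icc.mpr ⟨le_rfl, hj⟩, rfl⟩
      have h2 : h0 ^ (j + 1) ∈ Finset.univ \ (Finset.Icc (j + 1) k).image (fun i => h0 ^ i) := by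
        rw [hcontra]; exact Finset.mem_univ _
      exact (Finset.mem_sdiff.mp h2).2 hmem
    have hsync : syncTime E H.card (Finset.univ \ T0) = (k : ℕ∞) :=
      syncTime_eq_of E H.card _ k hfull hnotfull
    apply le_antisymm
    · exact iSup_le fun S => hub S.1 S.2
    · calc ((n - s : ℕ) : ℕ∞) = syncTime E H.card (Finset.univ \ T0) := by
            rw [hsync, ← hk]
        _ ≤ higherDiam E H.card s :=
            le_iSup (fun S : {S : Finset Γ // S.card = s} => syncTime E H.card S.1)
              ⟨Finset.univ \ T0, hS0card⟩
  · intro hs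
    set Tc := Finset.univ.image c with hTc
    have hTccard : Tc.card = m := by
      rw [hTc, Finset.card_image_of_injective _ hcinj, Finset.card_univ, ZMod.card]
    have hcompl : s ≤ (Finset.univ \ Tc).card := by
      rw [Finset.card_sdiff_of_subset (Finset.subset_univ _), Finset.card_univ, hTccard]
      omega
    obtain ⟨S, hSsub, hScard⟩ := Finset.exists_subset_card_eq hcompl
    have hnever : ∀ j (i : ZMod m), c i ∉ activeSets E H.card S j := by
      intro j
      induction j with
      | zero =>
        intro i hi
        have h2 : c i ∈ Finset.univ \ Tc := hSsub hi
        exact (Finset.mem_sdiff.mp h2).2 (Finset.mem_image.mpr ⟨i, Finset.mem_univ _, rfl⟩)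
      | succ j ih =>
        intro i hi
        rw [activeSets_succ', mem_actStep H E hE] at hi
        rcases hi with hi | hall
        · exact ih i hi
        · have hedge := hcE (i - 1)
          rw [sub_add_cancel] at hedge
          obtain ⟨h, hh, hh2⟩ := (hE _ _).mp hedge
          have hrw : c (i - 1) = h⁻¹ * c i := by rw [hh2]; group
          have h3 := hall h hh
          rw [← hrw] at h3
          exact ih (i - 1) h3
    have hnofull : ¬ ∃ i, activeSets E H.card S i = Finset.univ := by
      rintro ⟨j, hj⟩
      exact hnever j 0 (by rw [hj]; exact Finset.mem_univ _)
    have hsync : syncTime E H.card S = ⊤ := by rw [syncTime, dif_neg hnofull]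
    apply le_antisymm le_top
    calc (⊤ : ℕ∞) = syncTime E H.card S := hsync.symm
      _ ≤ higherDiam E H.card s :=
          le_iSup (fun S : {S : Finset Γ // S.card = s} => syncTime E H.card S.1) ⟨S, hScard⟩
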